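/- Let H be an ordered graph on h vertices with a local barrier, and let r := χ_<(H). Then for every n ∈ ℕ there exist i ≠ j in [r+1] and an n-vertex ordered graph G with minimum degree δ(G) > (1 - 1/r)n - 1 such that some vertex of G lies in no copy of H in G. In particular G contains no H-cover and no perfect H-tiling. -/

import Mathlib

open Finset

def IsCopy {h n : ℕ} (H : SimpleGraph (Fin h)) (G : SimpleGraph (Fin n))
    (f : Fin h → Fin n) : Prop :=
  StrictMono f ∧ ∀ i j, H.Adj i j → G.Adj (f i) (f j)

def TilesOn {h n : ℕ} (H : SimpleGraph (Fin h)) (G : SimpleGraph (Fin n))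
    (X : Set (Fin n)) : Prop :=
  ∃ S : Set (Fin h → Fin n),
    (∀ f ∈ S, IsCopy H G f ∧ Set.range f ⊆ X) ∧
    (∀ v ∈ X, ∃! f, f ∈ S ∧ v ∈ Set.range f)

def HasPerfectTiling {h n : ℕ} (H : SimpleGraph (Fin h)) (G : SimpleGraph (Fin n)) : Prop :=
  TilesOn H G Set.univ

/-- An interval `r`-colouring of an ordered graph `H` on `[h]`, encoded by its boundary
function `b`: the `k`-th class (for `k < r`) is the interval `[b k, b (k+1))`. -/
structure IColouring {h : ℕ} (H : SimpleGraph (Fin h)) (r : ℕ) where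
  b : ℕ → ℕ
  mono : Monotone b
  first : b 0 = 0
  last : b r = h
  indep : ∀ k < r, ∀ i j : Fin h,
    b k ≤ (i : ℕ) → (i : ℕ) < b (k + 1) → b k ≤ (j : ℕ) → (j : ℕ) < b (k + 1) → ¬ H.Adj i j

/-- The interval chromatic number. -/
noncomputable def chiLt {h : ℕ} (H : SimpleGraph (Fin h)) : ℕ :=
  sInf {r | Nonempty (IColouring H r)}

/-- `v` and `w` lie in the same class of the interval partition with boundaries `c`. -/
def SameClass (c : ℕ → ℕ) (v w : ℕ) : Prop := ∀ k, c k ≤ v ↔ c k ≤ w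

/-- The ordered complete multipartite graph on `[n]` whose parts are the intervals with
boundary function `c`. -/
def OrdMultiB (n : ℕ) (c : ℕ → ℕ) : SimpleGraph (Fin n) :=
  SimpleGraph.fromRel (fun v w => ¬ SameClass c (v : ℕ) (w : ℕ))

/-- boundaries from part sizes -/
def bnd (q : ℕ → ℕ) (i : ℕ) : ℕ := ∑ j ∈ Finset.range i, q j

noncomputable def deg {n : ℕ} (G : SimpleGraph (Fin n)) (v : Fin n) : ℕ :=
  {w | G.Adj v w}.ncard

noncomputable def minDeg {n : ℕ} (G : SimpleGraph (Fin n)) : ℕ :=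
  sInf (Set.range (deg G))

/-- `B`, the complete `k`-partite graph with part sizes `p`, is a bottlegraph of `H`:
for every permutation `σ` of the parts (every interval labelling) there is a blow-up
factor `t` such that the ordered blow-up contains a perfect `H`-tiling. -/
def IsBottlegraph {h : ℕ} (H : SimpleGraph (Fin h)) (k : ℕ) (p : Fin k → ℕ) : Prop :=
  (∀ i, 0 < p i) ∧
  ∀ σ : Equiv.Perm (Fin k), ∃ t : ℕ, 0 < t ∧
    HasPerfectTiling H
      (OrdMultiB (bnd (fun j => if hj : j < k then t * p (σ ⟨j, hj⟩) else 0) k)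
        (bnd (fun j => if hj : j < k then t * p (σ ⟨j, hj⟩) else 0)))

noncomputable def minPart (k : ℕ) (p : Fin k → ℕ) : ℕ := sInf (Set.range fun i => p i)

/-- The critical chromatic number of a complete `k`-partite graph with part sizes `p`. -/
noncomputable def chiCrParts (k : ℕ) (p : Fin k → ℕ) : ℚ :=
  ((k : ℚ) - 1) * (∑ i, (p i : ℚ)) / ((∑ i, (p i : ℚ)) - (minPart k p : ℚ))

/-- The ordered critical chromatic number. -/
noncomputable def chiCrStar {h : ℕ} (H : SimpleGraph (Fin h)) : ℝ :=
  sInf {x : ℝ | ∃ (k : ℕ) (p : Fin k → ℕ), IsBottlegraph H k p ∧ x = (chiCrParts k p : ℝ)}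

/-- `H` has a local barrier with respect to (0-indexed) classes `i ≠ j` among the `r+1`
interval classes: in every interval `(r+1)`-colouring of `H` in which class `i` is a
singleton `{v}`, there is an edge between `v` and class `j`. -/
def LocalBarrierAt {h : ℕ} (H : SimpleGraph (Fin h)) (r i j : ℕ) : Prop :=
  ∀ C : IColouring H (r + 1), C.b i + 1 = C.b (i + 1) →
    ∃ v w : Fin h, (v : ℕ) = C.b i ∧ C.b j ≤ (w : ℕ) ∧ (w : ℕ) < C.b (j + 1) ∧ H.Adj v w

def HasLocalBarrier {h : ℕ} (H : SimpleGraph (Fin h)) (r : ℕ) : Prop :=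
  ∃ i j, i < r + 1 ∧ j < r + 1 ∧ i ≠ j ∧ LocalBarrierAt H r i j


lemma bnd_mono' (q : ℕ → ℕ) : Monotone (bnd q) := fun a b hab =>
  Finset.sum_le_sum_of_subset (Finset.range_subset_range.2 hab)

lemma bnd_succ' (q : ℕ → ℕ) (k : ℕ) : bnd q (k+1) = bnd q k + q k :=
  Finset.sum_range_succ q k

lemma sameClass_of_between {c : ℕ → ℕ} (hc : Monotone c) {k x y : ℕ}
    (h1 : c k ≤ x) (h2 : x < c (k+1)) (h3 : c k ≤ y) (h4 : y < c (k+1)) :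
    SameClass c x y := by
  intro l
  rcases le_or_gt l k with hl | hl
  · exact iff_of_true (le_trans (hc hl) h1) (le_trans (hc hl) h3)
  · exact iff_of_false (fun hx => absurd (le_trans (hc hl) hx) (not_le.2 h2))
      (fun hy => absurd (le_trans (hc hl) hy) (not_le.2 h4))

lemma ncard_band (n a b : ℕ) : {x : Fin n | a ≤ (x:ℕ) ∧ (x:ℕ) < b}.ncard ≤ b - a := by
  have h1 : {x : Fin n | a ≤ (x:ℕ) ∧ (x:ℕ) < b}.ncard ≤ (Set.Ico a b).ncard := by
    refine Set.ncard_le_ncard_of_injOn (fun x => (x:ℕ)) (fun x hx => hx)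
      (fun x _ y _ hxy => Fin.ext hxy) (Set.finite_Ico a b)
  have h2 : (Set.Ico a b).ncard = b - a := by
    rw [Set.ncard_eq_toFinset_card', Set.toFinset_Ico, Nat.card_Ico]
  omega

lemma nocopy {h n : ℕ} (H : SimpleGraph (Fin h)) (r i₀ j₀ : ℕ)
    (hLB : LocalBarrierAt H r i₀ j₀)
    (c : ℕ → ℕ) (hc : Monotone c) (hc0 : c 0 = 0) (hctop : c (r+1) = n)
    (hci : c (i₀+1) = c i₀ + 1) (v : Fin n) (hv : (v:ℕ) = c i₀)
    (G : SimpleGraph (Fin n))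
    (hGbar : ∀ x : Fin n, c j₀ ≤ (x:ℕ) → (x:ℕ) < c (j₀+1) → ¬ G.Adj v x)
    (hGsame : ∀ x y : Fin n, SameClass c (x:ℕ) (y:ℕ) → ¬ G.Adj x y) :
    ¬ ∃ f, IsCopy H G f ∧ v ∈ Set.range f := by
  rintro ⟨f, ⟨hmono, hedge⟩, a₀, ha₀⟩
  set b' : ℕ → ℕ := fun k => (Finset.univ.filter fun a : Fin h => (f a : ℕ) < c k).card
    with hb'
  have hchar : ∀ (k : ℕ) (a : Fin h), b' k ≤ (a:ℕ) ↔ c k ≤ (f a : ℕ) := by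
    intro k a
    constructor
    · intro hba
      by_contra hfa
      push_neg at hfa
      have hsub : Finset.Iic a ⊆ Finset.univ.filter fun a' : Fin h => (f a' : ℕ) < c k := by
        intro a' ha'
        simp only [Finset.mem_filter, Finset.mem_univ, true_and]
        have : f a' ≤ f a := hmono.monotone (Finset.mem_Iic.1 ha')
        exact lt_of_le_of_lt this hfa
      have h2 := Finset.card_le_card hsub
      rw [Fin.card_Iic] at h2
      have hbk : b' k = (Finset.univ.filter fun a' : Fin h => (f a' : ℕ) < c k).card := rfl
      omega
    · intro hfa
      have hsub : (Finset.univ.filter fun a' : Fin h => (f a' : ℕ) < c k) ⊆ Finset.Iio a := by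
        intro a' ha'
        simp only [Finset.mem_filter, Finset.mem_univ, true_and] at ha'
        rw [Finset.mem_Iio]
        have hv2 : (f a' : ℕ) < (f a : ℕ) := lt_of_lt_of_le ha' hfa
        exact hmono.lt_iff_lt.1 hv2
      have := Finset.card_le_card hsub
      rw [Fin.card_Iio] at this
      exact this
  have hmonob : Monotone b' := by
    intro k l hkl
    apply Finset.card_le_card
    intro a ha
    simp only [Finset.mem_filter, Finset.mem_univ, true_and] at ha ⊢
    exact lt_of_lt_of_le ha (hc hkl)
  have hb0 : b' 0 = 0 := by
    simp [hb', hc0]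
  have hbtop : b' (r+1) = h := by
    have he : (Finset.univ.filter fun a : Fin h => (f a : ℕ) < c (r+1)) = Finset.univ := by
      apply Finset.filter_true_of_mem
      intro a _
      rw [hctop]
      exact (f a).isLt
    simp [hb', he]
  have hindep : ∀ k < r+1, ∀ a₁ a₂ : Fin h, b' k ≤ (a₁:ℕ) → (a₁:ℕ) < b' (k+1) →
      b' k ≤ (a₂:ℕ) → (a₂:ℕ) < b' (k+1) → ¬ H.Adj a₁ a₂ := by
    intro k _ a₁ a₂ h1 h2 h3 h4 hadj
    have c1 : c k ≤ (f a₁:ℕ) := (hchar k a₁).1 h1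
    have c2 : (f a₁:ℕ) < c (k+1) := by
      by_contra hcon
      push_neg at hcon
      have := (hchar (k+1) a₁).2 hcon
      omega
    have c3 : c k ≤ (f a₂:ℕ) := (hchar k a₂).1 h3
    have c4 : (f a₂:ℕ) < c (k+1) := by
      by_contra hcon
      push_neg at hcon
      have := (hchar (k+1) a₂).2 hcon
      omega
    exact hGsame _ _ (sameClass_of_between hc c1 c2 c3 c4) (hedge _ _ hadj)
  have ha₀v : (f a₀ : ℕ) = c i₀ := by rw [ha₀, hv]
  have h1 : b' i₀ ≤ (a₀:ℕ) := (hchar i₀ a₀).2 (le_of_eq ha₀v.symm)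
  have h2 : (a₀:ℕ) < b' (i₀+1) := by
    by_contra hcon
    push_neg at hcon
    have := (hchar (i₀+1) a₀).1 hcon
    rw [hci, ha₀v] at this
    omega
  have hupper : b' (i₀+1) ≤ b' i₀ + 1 := by
    have hsub : (Finset.univ.filter fun a : Fin h => (f a:ℕ) < c (i₀+1)) ⊆
        insert a₀ (Finset.univ.filter fun a : Fin h => (f a:ℕ) < c i₀) := by
      intro a ha
      simp only [Finset.mem_filter, Finset.mem_univ, true_and, Finset.mem_insert] at ha ⊢
      rw [hci] at ha
      rcases Nat.lt_succ_iff_lt_or_eq.1 ha with hlt | heq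
      · exact Or.inr hlt
      · left
        apply hmono.injective
        apply Fin.ext
        rw [heq, ha₀v]
    calc b' (i₀+1) ≤ (insert a₀ (Finset.univ.filter fun a : Fin h => (f a:ℕ) < c i₀)).card :=
          Finset.card_le_card hsub
      _ ≤ b' i₀ + 1 := Finset.card_insert_le _ _
  let C : IColouring H (r+1) := ⟨b', hmonob, hb0, hbtop, hindep⟩
  have hsing : C.b i₀ + 1 = C.b (i₀+1) := by
    show b' i₀ + 1 = b' (i₀+1)
    omega
  obtain ⟨vH, wH, hvH, hw1, hw2, hadj⟩ := hLB C hsing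
  have hvH' : (vH:ℕ) = b' i₀ := hvH
  have hw1' : b' j₀ ≤ (wH:ℕ) := hw1
  have hw2' : (wH:ℕ) < b' (j₀+1) := hw2
  have hva : vH = a₀ := by
    apply Fin.ext
    omega
  have hG := hedge _ _ hadj
  rw [hva, ha₀] at hG
  have hcj1 : c j₀ ≤ (f wH : ℕ) := (hchar j₀ wH).1 hw1'
  have hcj2 : (f wH:ℕ) < c (j₀+1) := by
    by_contra hcon
    push_neg at hcon
    have := (hchar (j₀+1) wH).2 hcon
    omega
  exact hGbar _ hcj1 hcj2 hG


/-- If `H` has a local barrier then for every `n` there are `i ≠ j ∈ [r+1]` and an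
`n`-vertex ordered graph `G` with `δ(G) > (1 - 1/r)n - 1` in which some vertex lies in
no copy of `H`; in particular `G` has no `H`-cover and no perfect `H`-tiling. -/
theorem stmt1 {h : ℕ} (H : SimpleGraph (Fin h)) (r : ℕ) (hr : r = chiLt H)
    (hbar : HasLocalBarrier H r) (n : ℕ) (hn : 0 < n) :
    ∃ i j, i < r + 1 ∧ j < r + 1 ∧ i ≠ j ∧
      ∃ G : SimpleGraph (Fin n),
        (1 - 1 / (r : ℚ)) * n - 1 < (minDeg G : ℚ) ∧
        (∃ v : Fin n, ¬ ∃ f : Fin h → Fin n, IsCopy H G f ∧ v ∈ Set.range f) ∧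
        ¬ (∀ v : Fin n, ∃ f : Fin h → Fin n, IsCopy H G f ∧ v ∈ Set.range f) ∧
        ¬ HasPerfectTiling H G := by
  obtain ⟨i₀, j₀, hi₀, hj₀, hne, hLB⟩ := hbar
  rcases Nat.eq_zero_or_pos r with hr0 | hrpos
  · exfalso; omega
  set t := (n-1)/r with htdef
  set s := (n-1)%r with hsdef
  have hnts : r * t + s + 1 = n := by
    rw [htdef, hsdef]
    have := Nat.div_add_mod (n-1) r
    omega
  have hsr : s < r := by
    rw [hsdef]
    exact Nat.mod_lt _ hrpos
  have h1r : i₀ ∈ Finset.range (r+1) := Finset.mem_range.2 hi₀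
  have h2r : j₀ ∈ (Finset.range (r+1)).erase i₀ :=
    Finset.mem_erase.2 ⟨Ne.symm hne, Finset.mem_range.2 hj₀⟩
  have hcard : s ≤ (((Finset.range (r+1)).erase i₀).erase j₀).card := by
    rw [Finset.card_erase_of_mem h2r, Finset.card_erase_of_mem h1r, Finset.card_range]
    omega
  obtain ⟨A, hA, hAcard⟩ := Finset.exists_subset_card_eq hcard
  have hAi : i₀ ∉ A := fun hh => (Finset.mem_erase.1 (Finset.mem_erase.1 (hA hh)).2).1 rfl
  have hAj : j₀ ∉ A := fun hh => (Finset.mem_erase.1 (hA hh)).1 rfl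
  have hAr : A ⊆ Finset.range (r+1) := fun x hx =>
    Finset.mem_of_mem_erase (Finset.mem_of_mem_erase (hA hx))
  set q : ℕ → ℕ := fun k => (if k = i₀ then 1 else t) + (if k ∈ A then 1 else 0) with hqdef
  have qi : q i₀ = 1 := by simp [hqdef, hAi]
  have qj : q j₀ = t := by simp [hqdef, hAj, Ne.symm hne]
  have qb : ∀ k, q k ≤ t + 1 := by
    intro k
    rcases eq_or_ne k i₀ with hk | hk
    · rw [hk, qi]; omega
    · have hqk : q k = t + (if k ∈ A then 1 else 0) := by simp [hqdef, hk]
      rw [hqk]; split <;> omega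
  set c : ℕ → ℕ := bnd q with hcdef
  have hcmono : Monotone c := bnd_mono' q
  have hc0 : c 0 = 0 := Finset.sum_range_zero q
  have hstep : ∀ k, c (k+1) = c k + q k := bnd_succ' q
  have hci : c (i₀+1) = c i₀ + 1 := by rw [hstep, qi]
  have hcj : c (j₀+1) = c j₀ + t := by rw [hstep, qj]
  have hctop : c (r+1) = n := by
    show bnd q (r+1) = n
    unfold bnd
    have hsplit : ∀ k, q k = (if k = i₀ then 1 else t) + (if k ∈ A then 1 else 0) := fun k => rfl
    rw [Finset.sum_congr rfl (fun k _ => hsplit k), Finset.sum_add_distrib]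
    have e1 : ∑ k ∈ Finset.range (r+1), (if k = i₀ then 1 else t) = 1 + r * t := by
      rw [← Finset.add_sum_erase _ _ h1r, if_pos rfl]
      congr 1
      rw [Finset.sum_congr rfl (fun x hx => if_neg (Finset.mem_erase.1 hx).1),
        Finset.sum_const, Finset.card_erase_of_mem h1r, Finset.card_range]
      simp [Nat.mul_comm]
    have e2 : ∑ k ∈ Finset.range (r+1), (if k ∈ A then 1 else 0) = s := by
      rw [Finset.sum_ite_mem, Finset.inter_eq_right.2 hAr, Finset.sum_const, hAcard]
      simp
    rw [e1, e2]
    omega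
  have hciltn : c i₀ < n := by
    have hmo := hcmono (show i₀+1 ≤ r+1 by omega)
    rw [hci, hctop] at hmo
    omega
  set v : Fin n := ⟨c i₀, hciltn⟩ with hvdef
  set G : SimpleGraph (Fin n) := SimpleGraph.fromRel (fun a b =>
    ¬ SameClass c (a:ℕ) (b:ℕ) ∧
    ¬((a:ℕ) = c i₀ ∧ c j₀ ≤ (b:ℕ) ∧ (b:ℕ) < c (j₀+1)) ∧
    ¬((b:ℕ) = c i₀ ∧ c j₀ ≤ (a:ℕ) ∧ (a:ℕ) < c (j₀+1))) with hGdef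
  have hsymm : ∀ x y : ℕ, SameClass c x y → SameClass c y x := fun x y hs k => (hs k).symm
  have hAdj : ∀ a b : Fin n, G.Adj a b ↔ (a ≠ b ∧ ¬ SameClass c (a:ℕ) (b:ℕ) ∧
      ¬((a:ℕ) = c i₀ ∧ c j₀ ≤ (b:ℕ) ∧ (b:ℕ) < c (j₀+1)) ∧
      ¬((b:ℕ) = c i₀ ∧ c j₀ ≤ (a:ℕ) ∧ (a:ℕ) < c (j₀+1))) := by
    intro a b
    rw [hGdef, SimpleGraph.fromRel_adj]
    constructor
    · rintro ⟨hab, hh | hh⟩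
      · exact ⟨hab, hh⟩
      · exact ⟨hab, fun hs => hh.1 (hsymm _ _ hs), hh.2.2, hh.2.1⟩
    · rintro ⟨hab, hh⟩
      exact ⟨hab, Or.inl hh⟩
  have hGsame : ∀ x y : Fin n, SameClass c (x:ℕ) (y:ℕ) → ¬ G.Adj x y := by
    intro x y hs hadj
    exact ((hAdj x y).1 hadj).2.1 hs
  have hvval : (v:ℕ) = c i₀ := rfl
  have hGbar : ∀ x : Fin n, c j₀ ≤ (x:ℕ) → (x:ℕ) < c (j₀+1) → ¬ G.Adj v x := by
    intro x hx1 hx2 hadj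
    exact ((hAdj v x).1 hadj).2.2.1 ⟨hvval, hx1, hx2⟩
  have hnc := nocopy H r i₀ j₀ hLB c hcmono hc0 hctop hci v hvval G hGbar hGsame
  have hpart : ∀ w : Fin n, ∃ k, k ≤ r ∧ c k ≤ (w:ℕ) ∧ (w:ℕ) < c (k+1) := by
    intro w
    have hP0 : c 0 ≤ (w:ℕ) := by rw [hc0]; exact Nat.zero_le _
    refine ⟨Nat.findGreatest (fun l => c l ≤ (w:ℕ)) r, Nat.findGreatest_le r,
      Nat.findGreatest_spec (P := fun l => c l ≤ (w:ℕ)) (Nat.zero_le r) hP0, ?_⟩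
    by_contra hcon
    push_neg at hcon
    rcases le_or_gt (Nat.findGreatest (fun l => c l ≤ (w:ℕ)) r + 1) r with hle | hlt
    · exact Nat.findGreatest_is_greatest (Nat.lt_succ_self _) hle hcon
    · have hfg : Nat.findGreatest (fun l => c l ≤ (w:ℕ)) r = r := by
        have := Nat.findGreatest_le (P := fun l => c l ≤ (w:ℕ)) r
        omega
      rw [hfg, hctop] at hcon
      exact absurd hcon (not_le.2 w.isLt)
  have hdisj : ∀ k l (x:ℕ), k ≠ l → c k ≤ x → x < c (k+1) → c l ≤ x → x < c (l+1) → False := by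
    intro k l x hkl hh1 hh2 hh3 hh4
    rcases lt_or_gt_of_ne hkl with hlt | hlt
    · exact absurd (le_trans (hcmono (show k+1 ≤ l by omega)) hh3) (not_le.2 hh2)
    · exact absurd (le_trans (hcmono (show l+1 ≤ k by omega)) hh1) (not_le.2 hh4)
  have hcases : ∀ w x : Fin n, ¬ G.Adj w x → w = x ∨ SameClass c (w:ℕ) (x:ℕ) ∨
      ((w:ℕ) = c i₀ ∧ c j₀ ≤ (x:ℕ) ∧ (x:ℕ) < c (j₀+1)) ∨
      ((x:ℕ) = c i₀ ∧ c j₀ ≤ (w:ℕ) ∧ (w:ℕ) < c (j₀+1)) := by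
    intro w x hx
    rw [hAdj] at hx
    tauto
  have hbad : ∀ w : Fin n, {x : Fin n | ¬ G.Adj w x}.ncard ≤ t + 1 := by
    intro w
    obtain ⟨k, hkr, hk1, hk2⟩ := hpart w
    rcases eq_or_ne ((w:ℕ)) (c i₀) with hwv | hwv
    · have hsub : {x : Fin n | ¬ G.Adj w x} ⊆
          {x : Fin n | c j₀ ≤ (x:ℕ) ∧ (x:ℕ) < c (j₀+1)} ∪ {w} := by
        intro x hx
        rcases hcases w x hx with hh | hh | hh | hh
        · exact Or.inr (Set.mem_singleton_iff.2 hh.symm)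
        · right
          have e1 : c i₀ ≤ (x:ℕ) := (hh i₀).1 (le_of_eq hwv.symm)
          have e2 : ¬ (c (i₀+1) ≤ (x:ℕ)) := fun hcc => by
            have h3 := (hh (i₀+1)).2 hcc
            rw [hci] at h3
            omega
          rw [hci] at e2
          exact Set.mem_singleton_iff.2 (Fin.ext (by omega : (x:ℕ) = (w:ℕ)))
        · exact Or.inl ⟨hh.2.1, hh.2.2⟩
        · exact Or.inr (Set.mem_singleton_iff.2 (Fin.ext (by omega : (x:ℕ) = (w:ℕ))))
      calc {x : Fin n | ¬ G.Adj w x}.ncard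
          ≤ ({x : Fin n | c j₀ ≤ (x:ℕ) ∧ (x:ℕ) < c (j₀+1)} ∪ {w}).ncard :=
            Set.ncard_le_ncard hsub (Set.toFinite _)
        _ ≤ {x : Fin n | c j₀ ≤ (x:ℕ) ∧ (x:ℕ) < c (j₀+1)}.ncard + ({w} : Set (Fin n)).ncard :=
            Set.ncard_union_le _ _
        _ ≤ t + 1 := by
            have hb := ncard_band n (c j₀) (c (j₀+1))
            rw [Set.ncard_singleton]
            have hcj' := hcj
            omega
    · rcases eq_or_ne k j₀ with hkj | hkj
      · rw [hkj] at hk1 hk2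
        have hsub : {x : Fin n | ¬ G.Adj w x} ⊆
            {x : Fin n | c j₀ ≤ (x:ℕ) ∧ (x:ℕ) < c (j₀+1)} ∪ {v} := by
          intro x hx
          rcases hcases w x hx with hh | hh | hh | hh
          · rw [← hh]; exact Or.inl ⟨hk1, hk2⟩
          · left
            refine ⟨(hh j₀).1 hk1, ?_⟩
            by_contra hcc
            push_neg at hcc
            have := (hh (j₀+1)).2 hcc
            omega
          · exact absurd hh.1 hwv
          · exact Or.inr (Set.mem_singleton_iff.2 (Fin.ext hh.1))
        calc {x : Fin n | ¬ G.Adj w x}.ncard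
            ≤ ({x : Fin n | c j₀ ≤ (x:ℕ) ∧ (x:ℕ) < c (j₀+1)} ∪ {v}).ncard :=
              Set.ncard_le_ncard hsub (Set.toFinite _)
          _ ≤ {x : Fin n | c j₀ ≤ (x:ℕ) ∧ (x:ℕ) < c (j₀+1)}.ncard + ({v} : Set (Fin n)).ncard :=
              Set.ncard_union_le _ _
          _ ≤ t + 1 := by
              have hb := ncard_band n (c j₀) (c (j₀+1))
              rw [Set.ncard_singleton]
              have hcj' := hcj
              omega
      · have hsub : {x : Fin n | ¬ G.Adj w x} ⊆
            {x : Fin n | c k ≤ (x:ℕ) ∧ (x:ℕ) < c (k+1)} := by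
          intro x hx
          rcases hcases w x hx with hh | hh | hh | hh
          · rw [← hh]; exact ⟨hk1, hk2⟩
          · refine ⟨(hh k).1 hk1, ?_⟩
            by_contra hcc
            push_neg at hcc
            have := (hh (k+1)).2 hcc
            omega
          · exact absurd hh.1 hwv
          · exact absurd (hdisj k j₀ (w:ℕ) hkj hk1 hk2 hh.2.1 hh.2.2) (fun hf => hf)
        calc {x : Fin n | ¬ G.Adj w x}.ncard
            ≤ {x : Fin n | c k ≤ (x:ℕ) ∧ (x:ℕ) < c (k+1)}.ncard :=
              Set.ncard_le_ncard hsub (Set.toFinite _)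
          _ ≤ t + 1 := by
              have hb := ncard_band n (c k) (c (k+1))
              have := hstep k
              have := qb k
              omega
  have hdeg : ∀ w : Fin n, n ≤ deg G w + (t+1) := by
    intro w
    have hcompl := Set.ncard_add_ncard_compl {x : Fin n | G.Adj w x}
    rw [Set.compl_setOf] at hcompl
    have hb := hbad w
    have hcn : Nat.card (Fin n) = n := by simp
    have hdd : deg G w = {x : Fin n | G.Adj w x}.ncard := rfl
    omega
  have hmd : n - (t+1) ≤ minDeg G := by
    show n - (t+1) ≤ sInf (Set.range (deg G))
    refine le_csInf ⟨deg G ⟨0, hn⟩, ⟨⟨0, hn⟩, rfl⟩⟩ ?_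
    rintro x ⟨w, rfl⟩
    have := hdeg w
    omega
  refine ⟨i₀, j₀, hi₀, hj₀, hne, G, ?_, ⟨v, hnc⟩, ?_, ?_⟩
  · have hrQ : (0:ℚ) < r := by exact_mod_cast hrpos
    have hrt : t ≤ r * t := Nat.le_mul_of_pos_left t hrpos
    have htn : t + 1 ≤ n := by omega
    have hmQ : ((n - (t+1) : ℕ):ℚ) ≤ (minDeg G : ℚ) := Nat.cast_le.2 hmd
    rw [Nat.cast_sub htn] at hmQ
    push_cast at hmQ
    have hltn : t * r < n := by
      have hcc : t * r = r * t := Nat.mul_comm t r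
      omega
    have hlt : (t:ℚ) * r < n := by exact_mod_cast hltn
    have hdivlt : (t:ℚ) < n / r := (lt_div_iff₀ hrQ).2 hlt
    have he : (1 - 1/(r:ℚ)) * n - 1 = (n:ℚ) - n/(r:ℚ) - 1 := by ring
    rw [he]
    linarith
  · intro hall
    exact hnc (hall v)
  · rintro ⟨S, hS1, hS2⟩
    obtain ⟨g, ⟨hgS, hgv⟩, -⟩ := hS2 v (Set.mem_univ v)
    exact hnc ⟨g, (hS1 g hgS).1, hgv⟩
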